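/- Let T ∈ (0,∞), let θ be a partition of [0,T], let α ∈ [0,1], let (E,‖·‖_E) be a normed real vector space, and let f : [0,T] → E be a function. Then ‖f − [f]_θ‖_{C([0,T],E)} ≤ (d_max(θ)/2)^α · |f|_{C^α([0,T],E)} (in [0,∞]). -/

import Mathlib

open ENNReal

/-- The Hölder seminorm (exponent `r`) of `f` on `[0,T]`. -/
noncomputable def holderSemiOn {E : Type} [NormedAddCommGroup E]
    (T : ℝ) (r : ℝ) (f : ℝ → E) : ℝ≥0∞ :=
  ⨆ (s : ℝ) (t : ℝ) (_ : s ∈ Set.Icc (0:ℝ) T) (_ : t ∈ Set.Icc (0:ℝ) T)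
    (_ : s ≠ t), (‖f s - f t‖₊ : ℝ≥0∞) / ENNReal.ofReal (|s - t| ^ r)

/-- The supremum norm of `f` on `[0,T]`. -/
noncomputable def supNormOn {E : Type} [NormedAddCommGroup E]
    (T : ℝ) (f : ℝ → E) : ℝ≥0∞ :=
  ⨆ (t : ℝ) (_ : t ∈ Set.Icc (0:ℝ) T), (‖f t‖₊ : ℝ≥0∞)

/-- Maximal mesh size of the partition with nodes `θ 0 < θ 1 < … < θ K`. -/
noncomputable def dMax (K : ℕ) (θ : ℕ → ℝ) : ℝ := ⨆ j : Fin K, (θ (j + 1) - θ j)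

/-- Key concavity inequality: `(b/h) a^α + (a/h) b^α ≤ (h/2)^α` when `a+b=h`. -/
lemma key_concave_ineq {α a b h : ℝ} (hα0 : 0 ≤ α) (hα1 : α ≤ 1)
    (ha : 0 ≤ a) (hb : 0 ≤ b) (hab : a + b = h) (hpos : 0 < h) :
    (b / h) * a ^ α + (a / h) * b ^ α ≤ (h / 2) ^ α := by
  have hsum : b / h + a / h = 1 := by field_simp; linarith
  have h1 := (Real.concaveOn_rpow hα0 hα1).2 (Set.mem_Ici.2 ha) (Set.mem_Ici.2 hb)
    (div_nonneg hb hpos.le) (div_nonneg ha hpos.le) hsum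
  simp only [smul_eq_mul] at h1
  refine h1.trans (Real.rpow_le_rpow (by positivity) ?_ hα0)
  rw [div_mul_eq_mul_div, div_mul_eq_mul_div, ← add_div,
    div_le_div_iff₀ hpos two_pos]
  nlinarith [sq_nonneg (a - b)]

/-- Every point of `[θ 0, θ K]` lies in some subinterval `[θ j, θ (j+1)]`. -/
lemma exists_seg (θ : ℕ → ℝ) : ∀ K : ℕ, 1 ≤ K → ∀ t : ℝ, θ 0 ≤ t → t ≤ θ K →
    ∃ j, j < K ∧ θ j ≤ t ∧ t ≤ θ (j + 1) := by
  intro K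
  induction K with
  | zero => intro h; omega
  | succ n ih =>
    intro _ t ht0 htK
    rcases Nat.eq_zero_or_pos n with hn | hn
    · subst hn; exact ⟨0, by omega, ht0, htK⟩
    by_cases hle : t ≤ θ n
    · obtain ⟨j, hj, h1, h2⟩ := ih hn t ht0 hle
      exact ⟨j, by omega, h1, h2⟩
    · exact ⟨n, by omega, (not_le.1 hle).le, htK⟩

/-- **Lemma 2.2** (approximation error for piecewise affine linear
interpolation): `‖f − [f]_θ‖_{C([0,T],E)} ≤ (d_max(θ)/2)^α |f|_{C^α([0,T],E)}`,
where `g = [f]_θ` is the piecewise affine linear interpolation of `f` at the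
nodes of the partition `θ`. -/
theorem lem_estNaffine
    {E : Type} [NormedAddCommGroup E] [NormedSpace ℝ E]
    (T : ℝ) (hT : 0 < T) (α : ℝ) (hα : α ∈ Set.Icc (0:ℝ) 1)
    (K : ℕ) (hK : 1 ≤ K) (θ : ℕ → ℝ)
    (hθ0 : θ 0 = 0) (hθK : θ K = T)
    (hθmono : ∀ j, j < K → θ j < θ (j + 1))
    (f g : ℝ → E)
    (hg : ∀ j, j < K → ∀ s ∈ Set.Icc (θ j) (θ (j + 1)),
        g s = ((θ (j + 1) - s) / (θ (j + 1) - θ j)) • f (θ j)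
            + ((s - θ j) / (θ (j + 1) - θ j)) • f (θ (j + 1))) :
    supNormOn T (fun t => f t - g t)
      ≤ ENNReal.ofReal ((dMax K θ / 2) ^ α) * holderSemiOn T α f := by
  obtain ⟨hα0, hα1⟩ := hα
  -- monotonicity of the nodes
  have hmono : ∀ j, j ≤ K → ∀ i, i ≤ j → θ i ≤ θ j := by
    intro j
    induction j with
    | zero => intro _ i hi; rw [Nat.le_zero.mp hi]
    | succ n ihn =>
      intro hj i hi
      rcases eq_or_lt_of_le hi with hi' | hi'
      · subst hi'; exact le_refl _
      · exact (ihn (by omega) i (by omega)).trans (hθmono n (by omega)).le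
  -- dMax bounds each mesh and is positive
  have hdmax : ∀ j, j < K → θ (j + 1) - θ j ≤ dMax K θ := by
    intro j hj
    have := le_ciSup (f := fun i : Fin K => θ (i + 1) - θ i)
      (Set.Finite.bddAbove (Set.finite_range _)) ⟨j, hj⟩
    simpa [dMax] using this
  have hdmaxpos : 0 < dMax K θ :=
    lt_of_lt_of_le (sub_pos.2 (hθmono 0 (by omega))) (hdmax 0 (by omega))
  have hfacpos : 0 < (dMax K θ / 2) ^ α := Real.rpow_pos_of_pos (by linarith) α
  rw [supNormOn]
  refine iSup_le fun t => iSup_le fun ht => ?_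
  -- locate t in a subinterval
  obtain ⟨j, hj, htj, htj1⟩ := exists_seg θ K hK t (hθ0 ▸ ht.1) (hθK ▸ ht.2)
  set h := θ (j + 1) - θ j with hh
  have hpos : 0 < h := sub_pos.2 (hθmono j hj)
  set a := t - θ j with hadef
  set b := θ (j + 1) - t with hbdef
  have ha : 0 ≤ a := by rw [hadef]; linarith
  have hb : 0 ≤ b := by rw [hbdef]; linarith
  have hab : a + b = h := by rw [hadef, hbdef, hh]; ring
  have hsum : b / h + a / h = 1 := by field_simp; linarith
  -- decomposition of the error
  have hgt := hg j hj t ⟨htj, htj1⟩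
  have hdec : f t - g t = (b / h) • (f t - f (θ j)) + (a / h) • (f t - f (θ (j + 1))) := by
    have h2 : (b / h) • f t + (a / h) • f t = f t := by
      rw [← add_smul, hsum, one_smul]
    rw [hgt, ← hadef, ← hbdef, ← hh]
    conv_lhs => rw [← h2]
    rw [smul_sub, smul_sub]
    abel
  -- endpoints are in [0, T]
  have hθjmem : θ j ∈ Set.Icc (0:ℝ) T :=
    ⟨hθ0 ▸ hmono j (by omega) 0 (by omega), hθK ▸ hmono K le_rfl j (by omega)⟩
  have hθj1mem : θ (j + 1) ∈ Set.Icc (0:ℝ) T :=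
    ⟨hθ0 ▸ hmono (j + 1) (by omega) 0 (by omega), hθK ▸ hmono K le_rfl (j + 1) (by omega)⟩
  set H := holderSemiOn T α f with hH
  by_cases hHtop : H = ⊤
  · rw [hHtop, ENNReal.mul_top (by simp [ENNReal.ofReal_pos.2 hfacpos, ne_of_gt])]
    exact le_top
  -- the real-valued Hölder estimate
  set C := H.toReal with hC
  have hC0 : 0 ≤ C := ENNReal.toReal_nonneg
  have hHolder : ∀ s u : ℝ, s ∈ Set.Icc (0:ℝ) T → u ∈ Set.Icc (0:ℝ) T →
      ‖f s - f u‖ ≤ C * |s - u| ^ α := by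
    intro s u hs hu
    rcases eq_or_ne s u with rfl | hsu
    · simpa using mul_nonneg hC0 (Real.rpow_nonneg (le_refl (0:ℝ)) α)
    have hd : 0 < |s - u| := abs_pos.2 (sub_ne_zero.2 hsu)
    have hdα : 0 < |s - u| ^ α := Real.rpow_pos_of_pos hd α
    have hle : (‖f s - f u‖₊ : ℝ≥0∞) / ENNReal.ofReal (|s - u| ^ α) ≤ H := by
      rw [hH, holderSemiOn]
      exact le_iSup_of_le s (le_iSup_of_le u (le_iSup_of_le hs (le_iSup_of_le hu
        (le_iSup_of_le hsu le_rfl))))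
    rw [ENNReal.div_le_iff (by simp [ENNReal.ofReal_pos.2 hdα, ne_of_gt])
      ENNReal.ofReal_ne_top] at hle
    have := ENNReal.toReal_mono (ENNReal.mul_ne_top hHtop ENNReal.ofReal_ne_top) hle
    rwa [ENNReal.toReal_mul, ENNReal.toReal_ofReal hdα.le, ENNReal.coe_toReal, coe_nnnorm] at this
  -- pointwise real estimate
  have hre : ‖f t - g t‖ ≤ C * (dMax K θ / 2) ^ α := by
    have e1 : ‖f t - g t‖ ≤ (b / h) * ‖f t - f (θ j)‖ + (a / h) * ‖f t - f (θ (j + 1))‖ := by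
      rw [hdec]
      refine (norm_add_le _ _).trans ?_
      rw [norm_smul, norm_smul, Real.norm_eq_abs, Real.norm_eq_abs,
        abs_of_nonneg (div_nonneg hb hpos.le), abs_of_nonneg (div_nonneg ha hpos.le)]
    have e2 : ‖f t - f (θ j)‖ ≤ C * a ^ α := by
      have := hHolder t (θ j) ht hθjmem
      rwa [show |t - θ j| = a by rw [abs_of_nonneg (by linarith)]] at this
    have e3 : ‖f t - f (θ (j + 1))‖ ≤ C * b ^ α := by
      have := hHolder t (θ (j + 1)) ht hθj1mem
      rwa [show |t - θ (j + 1)| = b by rw [abs_sub_comm, abs_of_nonneg (by linarith)]] at this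
    have e4 : (b / h) * (C * a ^ α) + (a / h) * (C * b ^ α)
        = C * ((b / h) * a ^ α + (a / h) * b ^ α) := by ring
    have e5 := key_concave_ineq hα0 hα1 ha hb hab hpos
    have e6 : (h / 2 : ℝ) ^ α ≤ (dMax K θ / 2) ^ α :=
      Real.rpow_le_rpow (by linarith) (by linarith [hdmax j hj]) hα0
    calc ‖f t - g t‖ ≤ (b / h) * ‖f t - f (θ j)‖ + (a / h) * ‖f t - f (θ (j + 1))‖ := e1
      _ ≤ (b / h) * (C * a ^ α) + (a / h) * (C * b ^ α) :=
          add_le_add (mul_le_mul_of_nonneg_left e2 (div_nonneg hb hpos.le))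
            (mul_le_mul_of_nonneg_left e3 (div_nonneg ha hpos.le))
      _ = C * ((b / h) * a ^ α + (a / h) * b ^ α) := e4
      _ ≤ C * (h / 2) ^ α := by
          exact mul_le_mul_of_nonneg_left e5 hC0
      _ ≤ C * (dMax K θ / 2) ^ α := mul_le_mul_of_nonneg_left e6 hC0
  -- conclude in ℝ≥0∞
  calc (‖f t - g t‖₊ : ℝ≥0∞) = ENNReal.ofReal ‖f t - g t‖ :=
        (ofReal_norm _).symm
    _ ≤ ENNReal.ofReal ((dMax K θ / 2) ^ α * C) := by
        exact ENNReal.ofReal_le_ofReal (by linarith [hre])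
    _ = ENNReal.ofReal ((dMax K θ / 2) ^ α) * ENNReal.ofReal C :=
        ENNReal.ofReal_mul hfacpos.le
    _ = ENNReal.ofReal ((dMax K θ / 2) ^ α) * H := by
        rw [hC, ENNReal.ofReal_toReal hHtop]
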